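/- Let n > 1 be odd, l = v_2(n+1), and define the binary sequence H_l of length φ(3^l) by H_{l,p} = a_{l, φ(3^l) − p − 1} mod 2 where a_{l,i} = 2^{−i}·(3^l − 1) mod 3^l. Let S_l be the right-infinite (periodic, with a suffix 1^l appended) binary string (H_l)^∞ followed by 1^l at the right end. If s is the length of the longest common suffix between the binary representation of n and S_l, then s ≥ l + 1, and the long Collatz step of n satisfies k = l and k' = s − l, where k' = v_2((3/2)^l·(n+1) − 1). -/

import Mathlib

/-- `a_{l,i} = 2^{-i}·(3^l - 1) mod 3^l`, as a natural number in `[0, 3^l)`. -/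
def aVal (l i : ℕ) : ℕ :=
  (((3 ^ l - 1 : ℕ) : ZMod (3 ^ l)) * ((2 : ZMod (3 ^ l))⁻¹) ^ i).val

/-- The `j`-th bit (from the right, 0-indexed) of the right-infinite binary string
`S_l = (H_l)^∞ 1^l`, where `H_{l,p} = a_{l, φ(3^l) - p - 1} mod 2`: positions `0..l-1`
are `1`, and position `l + t` is `a_{l, t mod φ(3^l)} mod 2`. -/
def sBit (l j : ℕ) : ℕ :=
  if j < l then 1 else aVal l ((j - l) % Nat.totient (3 ^ l)) % 2

section aux

lemma coprime2 (l : ℕ) : Nat.Coprime 2 (3 ^ l) :=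
  Nat.Coprime.pow_right _ (by decide)

lemma two_mul_inv (l : ℕ) : (2 : ZMod (3 ^ l)) * (2 : ZMod (3 ^ l))⁻¹ = 1 := by
  apply ZMod.mul_inv_of_unit
  have := (ZMod.isUnit_iff_coprime 2 (3 ^ l)).mpr (coprime2 l)
  simpa using this

lemma aVal_lt (l i : ℕ) : aVal l i < 3 ^ l := by
  haveI : NeZero (3 ^ l) := ⟨(pow_pos (by norm_num) l).ne'⟩
  exact ZMod.val_lt _

lemma key_dvd (l i : ℕ) : 3 ^ l ∣ 2 ^ i * aVal l i + 1 := by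
  haveI : NeZero (3 ^ l) := ⟨(pow_pos (by norm_num) l).ne'⟩
  rw [← ZMod.natCast_eq_zero_iff]
  push_cast
  rw [aVal, ZMod.natCast_val, ZMod.cast_id]
  have : (2 : ZMod (3 ^ l)) ^ i * (((3 ^ l - 1 : ℕ) : ZMod (3 ^ l)) * ((2 : ZMod (3 ^ l))⁻¹) ^ i)
      = ((3 ^ l - 1 : ℕ) : ZMod (3 ^ l)) * ((2 : ZMod (3 ^ l)) * (2 : ZMod (3 ^ l))⁻¹) ^ i := by
    ring
  rw [this, two_mul_inv, one_pow, mul_one]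
  have h2 : ((3 ^ l - 1 : ℕ) : ZMod (3 ^ l)) + 1 = ((3 ^ l - 1 + 1 : ℕ) : ZMod (3 ^ l)) := by
    push_cast; ring
  rw [h2, Nat.sub_add_cancel (Nat.one_le_pow _ _ (by norm_num)), ZMod.natCast_self]

lemma inv_pow_totient (l : ℕ) :
    ((2 : ZMod (3 ^ l))⁻¹) ^ Nat.totient (3 ^ l) = 1 := by
  have h2p : (2 : ZMod (3 ^ l)) ^ Nat.totient (3 ^ l) = 1 := by
    have h := Nat.ModEq.pow_totient (coprime2 l)
    have h' := (ZMod.natCast_eq_natCast_iff _ _ (3 ^ l)).mpr h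
    push_cast at h'
    exact h'
  calc ((2 : ZMod (3 ^ l))⁻¹) ^ Nat.totient (3 ^ l)
      = ((2 : ZMod (3 ^ l))⁻¹) ^ Nat.totient (3 ^ l) * (2 : ZMod (3 ^ l)) ^ Nat.totient (3 ^ l) := by
        rw [h2p, mul_one]
    _ = ((2 : ZMod (3 ^ l))⁻¹ * 2) ^ Nat.totient (3 ^ l) := by rw [mul_pow]
    _ = 1 := by rw [mul_comm, two_mul_inv, one_pow]

lemma aVal_mod (l i : ℕ) : aVal l (i % Nat.totient (3 ^ l)) = aVal l i := by
  unfold aVal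
  congr 1
  conv_rhs => rw [← Nat.mod_add_div i (Nat.totient (3 ^ l))]
  rw [pow_add, pow_mul, inv_pow_totient, one_pow, mul_one]

/-- `(b*x - 1)/b = x - 1` for positive `b`, `x`. -/
lemma pred_div {b x : ℕ} (hb : 0 < b) (hx : 0 < x) : (b * x - 1) / b = x - 1 := by
  have h1 : b * (x - 1) + b = b * x := by
    obtain ⟨x', rfl⟩ : ∃ x', x = x' + 1 := ⟨x - 1, by omega⟩
    simp [Nat.add_sub_cancel, Nat.mul_add, Nat.mul_one]
  have h2 : b * x - 1 = b * (x - 1) + (b - 1) := by omega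
  rw [h2, Nat.mul_add_div hb, Nat.div_eq_of_lt (by omega), add_zero]

lemma modeq_drop (P : ℕ) (x y : ℕ) : x + P * 2 * y ≡ x [MOD P * 2] := by
  simp [Nat.ModEq, Nat.add_mul_mod_self_left]

lemma cong1 {P c a m M q L : ℕ} (e1 : L * c = P * a + 1) (hM : M = L * m)
    (hq : M = P * 2 * q + 1) :
    m ≡ c + P * (a * m % 2) [MOD P * 2] := by
  have h1 : c * M = P * 2 * (c * q) + c := by rw [hq]; ring
  have h2 : c * M = P * (a * m) + m := by
    rw [hM, show c * (L * m) = L * c * m by ring, e1]; ring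
  have h : P * 2 * (c * q) + c = P * (a * m) + m := by rw [← h1, h2]
  calc m ≡ m + P * 2 * (a * m) [MOD P * 2] := (modeq_drop P m (a * m)).symm
    _ = c + P * (a * m) + P * 2 * (c * q) := by nlinarith [h]
    _ ≡ c + P * (a * m) [MOD P * 2] := modeq_drop P _ _
    _ ≡ c + P * (a * m % 2) [MOD P * 2] := by
        have := Nat.ModEq.mul_left' (c := P) ((a * m).mod_modEq 2).symm
        exact Nat.ModEq.add_left c this

lemma cong2 {P c a m M w L : ℕ} (e1 : L * c = P * a + 1) (hM : M = L * m)
    (hw : M = P * w + 1) :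
    m ≡ c + P * ((c * w + a * m) % 2) [MOD P * 2] := by
  have h1 : c * M = P * (c * w) + c := by rw [hw]; ring
  have h2 : c * M = P * (a * m) + m := by
    rw [hM, show c * (L * m) = L * c * m by ring, e1]; ring
  have h : P * (c * w) + c = P * (a * m) + m := by rw [← h1, h2]
  calc m ≡ m + P * 2 * (a * m) [MOD P * 2] := (modeq_drop P m (a * m)).symm
    _ = c + P * (c * w + a * m) := by nlinarith [h]
    _ ≡ c + P * ((c * w + a * m) % 2) [MOD P * 2] := by
        have := Nat.ModEq.mul_left' (c := P) ((c * w + a * m).mod_modEq 2).symm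
        exact Nat.ModEq.add_left c this

lemma odd_of_mul {A c y : ℕ} (hA : A % 2 = 1) (h : A * c = y + 1) (hy : y % 2 = 0) :
    c % 2 = 1 := by
  have h3 : A * c % 2 = c % 2 := by
    rw [Nat.mul_mod, hA, one_mul, Nat.mod_mod_of_dvd _ dvd_rfl]
  omega

lemma testBit_pred {t c b m : ℕ} (hc1 : 1 ≤ c) (hcle : c ≤ 2 ^ t) (hb : b ≤ 1)
    (hmo : m % 2 = 1) (h : m ≡ c + 2 ^ t * b [MOD 2 ^ t * 2]) :
    (m - 1).testBit t = decide (b = 1) := by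
  have hP : 0 < 2 ^ t := pow_pos (by norm_num) t
  have hodd : (c + 2 ^ t * b) % 2 = 1 := by
    have h2 : m ≡ c + 2 ^ t * b [MOD 2] := h.of_dvd ⟨2 ^ t, by ring⟩
    unfold Nat.ModEq at h2
    omega
  have hble : 2 ^ t * b ≤ 2 ^ t := by
    calc 2 ^ t * b ≤ 2 ^ t * 1 := Nat.mul_le_mul_left _ hb
      _ = 2 ^ t := mul_one _
  have hlt : c + 2 ^ t * b < 2 ^ t * 2 := by
    have he : (2 ^ t * 2) % 2 = 0 := Nat.mul_mod_left _ _
    omega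
  have hmod : m % (2 ^ t * 2) = c + 2 ^ t * b := by
    rw [h]; exact Nat.mod_eq_of_lt hlt
  have hda := Nat.div_add_mod m (2 ^ t * 2)
  rw [hmod] at hda
  have hm1 : 1 ≤ m := by omega
  have hmod' : (m - 1) % (2 ^ t * 2) = (c - 1) + 2 ^ t * b := by
    have hrepr : m - 1 = 2 ^ t * 2 * (m / (2 ^ t * 2)) + ((c - 1) + 2 ^ t * b) := by omega
    rw [hrepr, Nat.mul_add_mod]
    exact Nat.mod_eq_of_lt (by omega)
  rw [Nat.testBit_eq_decide_div_mod_eq, ← Nat.mod_mul_right_div_self, hmod']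
  have : ((c - 1) + 2 ^ t * b) / 2 ^ t = b := by
    rw [add_comm, Nat.mul_add_div hP, Nat.div_eq_of_lt (by omega)]
    omega
  rw [this]

end aux

/-- Theorem 1: For odd `n > 1` with `l = v₂(n+1)`, the binary representation
of `n` shares with `S_l` a longest common suffix of some length `s ≥ l + 1` (agreement on
bits `0..s-1`, disagreement at bit `s`), and the long Collatz step of `n` has loop lengths
`k = l` and `k' = v₂((3/2)^l·(n+1) - 1) = s - l`. -/
theorem loop_lengths_from_binary_suffix (n l : ℕ) (hodd : Odd n) (hn : 1 < n)
    (hl : l = padicValNat 2 (n + 1)) :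
    ∃ s : ℕ,
      (∀ j < s, (n.testBit j = true ↔ sBit l j = 1)) ∧
      ¬(n.testBit s = true ↔ sBit l s = 1) ∧
      l + 1 ≤ s ∧
      padicValNat 2 (3 ^ l * ((n + 1) / 2 ^ l) - 1) = s - l := by
  have hn1 : n + 1 ≠ 0 := by omega
  set m := (n + 1) / 2 ^ l with hmdef
  have hdl : 2 ^ l ∣ n + 1 := by rw [hl]; exact pow_padicValNat_dvd
  have hm : 2 ^ l * m = n + 1 := Nat.mul_div_cancel' hdl
  have hPl : 0 < 2 ^ l := pow_pos (by norm_num) l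
  have hm1 : 1 ≤ m := by
    rcases Nat.eq_zero_or_pos m with h | h
    · rw [h, mul_zero] at hm; omega
    · exact h
  have hmodd : m % 2 = 1 := by
    rcases Nat.even_or_odd m with he | ho
    · exfalso
      obtain ⟨m', hm'⟩ := he
      apply pow_succ_padicValNat_not_dvd (p := 2) hn1
      rw [← hl, ← hm, hm']
      exact ⟨m', by ring⟩
    · exact Nat.odd_iff.mp ho
  have hl1 : 1 ≤ l := by
    by_contra hcon
    have hl0 : l = 0 := by omega
    apply pow_succ_padicValNat_not_dvd (p := 2) hn1
    rw [← hl, hl0, pow_one]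
    obtain ⟨r, hr⟩ := hodd
    exact ⟨r + 1, by omega⟩
  set M := 3 ^ l * m with hMdef
  have h3odd : (3 : ℕ) ^ l % 2 = 1 := Nat.odd_iff.mp (Odd.pow ⟨1, by norm_num⟩)
  have hModd : M % 2 = 1 := by rw [hMdef, Nat.mul_mod, h3odd, hmodd]
  have hM3 : 3 ≤ M := by
    have h3 : 3 ≤ 3 ^ l := by
      calc (3:ℕ) = 3 ^ 1 := (pow_one 3).symm
        _ ≤ 3 ^ l := Nat.pow_le_pow_right (by norm_num) hl1
    calc 3 ≤ 3 ^ l := h3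
      _ = 3 ^ l * 1 := (mul_one _).symm
      _ ≤ 3 ^ l * m := Nat.mul_le_mul_left _ hm1
  have hM1ne : M - 1 ≠ 0 := by omega
  set K := padicValNat 2 (M - 1) with hKdef
  have hdK : 2 ^ K ∣ M - 1 := pow_padicValNat_dvd
  set w := (M - 1) / 2 ^ K with hwdef
  have hw : 2 ^ K * w = M - 1 := Nat.mul_div_cancel' hdK
  have hPK : 0 < 2 ^ K := pow_pos (by norm_num) K
  have hwodd : w % 2 = 1 := by
    rcases Nat.even_or_odd w with he | ho
    · exfalso
      obtain ⟨w', hw'⟩ := he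
      apply pow_succ_padicValNat_not_dvd (p := 2) hM1ne
      rw [← hKdef, ← hw, hw']
      exact ⟨w', by ring⟩
    · exact Nat.odd_iff.mp ho
  have hK1 : 1 ≤ K := by
    by_contra hcon
    have hK0 : K = 0 := by omega
    apply pow_succ_padicValNat_not_dvd (p := 2) hM1ne
    rw [← hKdef, hK0, pow_one]
    exact ⟨(M - 1) / 2, by omega⟩
  -- basic facts about c_t
  have hc : ∀ t, 3 ^ l * ((2 ^ t * aVal l t + 1) / 3 ^ l) = 2 ^ t * aVal l t + 1 :=
    fun t => Nat.mul_div_cancel' (key_dvd l t)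
  have hc1 : ∀ t, 1 ≤ (2 ^ t * aVal l t + 1) / 3 ^ l := by
    intro t
    rcases Nat.eq_zero_or_pos ((2 ^ t * aVal l t + 1) / 3 ^ l) with h | h
    · exfalso; have := hc t; rw [h, mul_zero] at this; omega
    · exact h
  have hcle : ∀ t, (2 ^ t * aVal l t + 1) / 3 ^ l ≤ 2 ^ t := by
    intro t
    have h3pos : 0 < 3 ^ l := pow_pos (by norm_num) l
    have ha := aVal_lt l t
    have hPt : 0 < 2 ^ t := pow_pos (by norm_num) t
    have h1 : 3 ^ l * ((2 ^ t * aVal l t + 1) / 3 ^ l) ≤ 3 ^ l * 2 ^ t := by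
      rw [hc t]
      nlinarith
    exact Nat.le_of_mul_le_mul_left h1 h3pos
  -- n bits below l
  have hbit_lo : ∀ j, j < l → n.testBit j = true := by
    intro j hj
    have hdvd : 2 ^ (j + 1) ∣ n + 1 := dvd_trans (pow_dvd_pow 2 hj) hdl
    obtain ⟨q, hq⟩ := hdvd
    have hPj : 0 < 2 ^ j := pow_pos (by norm_num) j
    have hq1 : 1 ≤ q := by
      rcases Nat.eq_zero_or_pos q with h | h
      · rw [h, mul_zero] at hq; omega
      · exact h
    have hn' : n = 2 ^ j * (2 * q) - 1 := by
      rw [pow_succ] at hq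
      rw [show 2 ^ j * (2 * q) = 2 ^ j * 2 * q from by ring]
      omega
    rw [Nat.testBit_eq_decide_div_mod_eq, hn', pred_div hPj (by omega)]
    have : (2 * q - 1) % 2 = 1 := by omega
    simp [this]
  -- n bits at l + t
  have hbit_hi : ∀ t, n.testBit (l + t) = (m - 1).testBit t := by
    intro t
    have h1 : n.testBit (l + t) = (n >>> l).testBit t := (Nat.testBit_shiftRight n).symm
    rw [h1, Nat.shiftRight_eq_div_pow]
    have hn' : n = 2 ^ l * m - 1 := by omega
    rw [hn', pred_div hPl hm1]
  -- sBit at l + t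
  have hsbit_hi : ∀ t, sBit l (l + t) = aVal l t % 2 := by
    intro t
    rw [sBit, if_neg (by omega)]
    have : l + t - l = t := by omega
    rw [this, aVal_mod]
  -- agreement for t < K
  have hagree : ∀ t, t < K → (m - 1).testBit t = decide (aVal l t % 2 = 1) := by
    intro t ht
    set c := (2 ^ t * aVal l t + 1) / 3 ^ l with hcdef
    have hdvd : 2 ^ t * 2 ∣ M - 1 := by
      have : 2 ^ (t + 1) ∣ 2 ^ K := pow_dvd_pow 2 (by omega)
      rw [pow_succ] at this
      exact dvd_trans this hdK
    obtain ⟨q, hq⟩ := hdvd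
    have hMq : M = 2 ^ t * 2 * q + 1 := by omega
    have hcong := cong1 (P := 2 ^ t) (c := c) (a := aVal l t) (m := m) (M := M)
      (q := q) (L := 3 ^ l) (hc t) hMdef hMq
    have hb2 : aVal l t * m % 2 = aVal l t % 2 := by
      rw [Nat.mul_mod, hmodd, mul_one, Nat.mod_mod_of_dvd _ dvd_rfl]
    rw [hb2] at hcong
    exact testBit_pred (hc1 t) (hcle t) (by omega) hmodd hcong
  -- disagreement at K
  have hdis : (m - 1).testBit K = decide ((1 + aVal l K) % 2 = 1) := by
    set c' := (2 ^ K * aVal l K + 1) / 3 ^ l with hcdef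
    have hMw : M = 2 ^ K * w + 1 := by omega
    have hcong := cong2 (P := 2 ^ K) (c := c') (a := aVal l K) (m := m) (M := M)
      (w := w) (L := 3 ^ l) (hc K) hMdef hMw
    have hyev : 2 ^ K * aVal l K % 2 = 0 := by
      have hd : 2 ∣ 2 ^ K * aVal l K :=
        (dvd_pow_self 2 (by omega : K ≠ 0)).mul_right _
      omega
    have hc'odd : c' % 2 = 1 := odd_of_mul h3odd (hc K) hyev
    have hpar : (c' * w + aVal l K * m) % 2 = (1 + aVal l K) % 2 := by
      have hp1 : c' * w % 2 = 1 := by rw [Nat.mul_mod, hc'odd, hwodd]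
      have hp2 : aVal l K * m % 2 = aVal l K % 2 := by
        rw [Nat.mul_mod, hmodd, mul_one, Nat.mod_mod_of_dvd _ dvd_rfl]
      omega
    rw [hpar] at hcong
    have := testBit_pred (hc1 K) (hcle K) (by omega : (1 + aVal l K) % 2 ≤ 1) hmodd hcong
    exact this
  refine ⟨l + K, ?_, ?_, by omega, by omega⟩
  · intro j hj
    rcases Nat.lt_or_ge j l with hjl | hjl
    · rw [hbit_lo j hjl, sBit, if_pos hjl]
      simp
    · set t := j - l with htdef
      have hjt : j = l + t := by omega
      have htK : t < K := by omega
      rw [hjt, hbit_hi t, hsbit_hi t, hagree t htK]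
      constructor
      · intro h; exact of_decide_eq_true h
      · intro h; exact decide_eq_true h
  · rw [hbit_hi K, hsbit_hi K, hdis]
    intro hiff
    have ha2 : aVal l K % 2 < 2 := Nat.mod_lt _ (by norm_num)
    rcases (by omega : aVal l K % 2 = 0 ∨ aVal l K % 2 = 1) with h0 | h1
    · have : (1 + aVal l K) % 2 = 1 := by omega
      rw [this] at hiff
      have := hiff.mp (by simp)
      omega
    · have : (1 + aVal l K) % 2 = 0 := by omega
      rw [this] at hiff
      have := hiff.mpr h1
      simp at this
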